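/- arXiv:1003.5117 — 5 statements merged into one kernel-verified Lean document; each statement's English description precedes it below -/
import Mathlib

section
/- Let 1 → K → Γ → Q → 1 be a short exact sequence of groups where Q is perfect and the induced map H₂(Γ; ℚ) → H₂(Q; ℚ) is the zero map. Then the fibre product Λ ⊆ Γ × Γ satisfies b₁(Λ) = 2·b₁(Γ) + b₂(Q), where b_i denotes the dimension over ℚ of H_i(−; ℚ). -/
open scoped TensorProduct

universe u

/-- The first rational homology `H₁(G;ℚ)` of a group `G`: the rational
abelianization `G^{ab} ⊗ ℚ`. -/
def ratH1 (G : Type*) [Group G] : Type _ := ℚ ⊗[ℤ] Additive (Abelianization G)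

noncomputable instance (G : Type*) [Group G] : AddCommGroup (ratH1 G) := by
  unfold ratH1; infer_instance

noncomputable instance (G : Type*) [Group G] : Module ℚ (ratH1 G) := by
  unfold ratH1; infer_instance

/-- The first Betti number `b₁(G) = dim_ℚ H₁(G;ℚ)`. -/
noncomputable def b1 (G : Type*) [Group G] : Cardinal := Module.rank ℚ (ratH1 G)

/-- The Schur multiplier `H₂(Q;ℤ)` of `Q` computed by the Hopf formula
`(R ∩ [F,F]) / [F,R]` from a free presentation `p : F ↠ Q` with `R = ker p`. -/
def hopfH2 {Q : Type*} [Group Q] {X : Type*} (p : FreeGroup X →* Q) : Type _ :=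
  ↥(p.ker ⊓ commutator (FreeGroup X)) ⧸
    (⁅(⊤ : Subgroup (FreeGroup X)), p.ker⁆.subgroupOf (p.ker ⊓ commutator (FreeGroup X)))

noncomputable instance {Q : Type*} [Group Q] {X : Type*} (p : FreeGroup X →* Q) :
    Group (hopfH2 p) := by
  unfold hopfH2; infer_instance

/-- The second rational homology `H₂(Q;ℚ) = H₂(Q;ℤ) ⊗ ℚ`, computed via the Hopf
formula from a free presentation `p` (the group `hopfH2 p` is abelian, so passing
through its abelianization is harmless). -/
def ratH2 {Q : Type*} [Group Q] {X : Type*} (p : FreeGroup X →* Q) : Type _ :=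
  ℚ ⊗[ℤ] Additive (Abelianization (hopfH2 p))

noncomputable instance {Q : Type*} [Group Q] {X : Type*} (p : FreeGroup X →* Q) :
    AddCommGroup (ratH2 p) := by
  unfold ratH2; infer_instance

noncomputable instance {Q : Type*} [Group Q] {X : Type*} (p : FreeGroup X →* Q) :
    Module ℚ (ratH2 p) := by
  unfold ratH2; infer_instance

/-- The second rational Betti number `b₂(Q) = dim_ℚ H₂(Q;ℚ)` computed from the free
presentation `p`. -/
noncomputable def b2 {Q : Type*} [Group Q] {X : Type*} (p : FreeGroup X →* Q) : Cardinal :=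
  Module.rank ℚ (ratH2 p)

/-- The fibre product `Λ = {(γ₁,γ₂) : η γ₁ = η γ₂} ≤ Γ × Γ` of a homomorphism
`η : Γ → Q`. -/
def fibreProduct {Γ Q : Type*} [Group Γ] [Group Q] (η : Γ →* Q) : Subgroup (Γ × Γ) where
  carrier := {p | η p.1 = η p.2}
  one_mem' := rfl
  mul_mem' := by
    intro p q hp hq
    simp only [Set.mem_setOf_eq, Prod.fst_mul, Prod.snd_mul, map_mul] at *
    rw [hp, hq]
  inv_mem' := by
    intro p hp
    simp only [Set.mem_setOf_eq, Prod.fst_inv, Prod.snd_inv, map_inv] at *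
    rw [hp]

section Toolkit
variable {M N : Type*}

/-- ℚ is flat over ℤ. -/
instance : Module.Flat ℤ ℚ := IsLocalization.flat ℚ (nonZeroDivisors ℤ)

noncomputable def AddEquiv.toRatLinearEquiv [AddCommGroup M] [Module ℚ M] [AddCommGroup N]
    [Module ℚ N] (e : M ≃+ N) : M ≃ₗ[ℚ] N :=
  e.toLinearEquiv (fun c x => map_rat_smul e c x)

lemma rank_eq_of_addEquiv {M N : Type u} [AddCommGroup M] [Module ℚ M] [AddCommGroup N] [Module ℚ N]
    (e : M ≃+ N) : Module.rank ℚ M = Module.rank ℚ N :=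
  e.toRatLinearEquiv.rank_eq

/-- tensor with ℚ of (the additivization of) a hom of commutative groups -/
noncomputable def qtensor {G H : Type u} [CommGroup G] [CommGroup H] (f : G →* H) :
    ℚ ⊗[ℤ] Additive G →ₗ[ℤ] ℚ ⊗[ℤ] Additive H :=
  LinearMap.lTensor ℚ (AddMonoidHom.toIntLinearMap (MonoidHom.toAdditive f))

lemma qtensor_surjective {G H : Type u} [CommGroup G] [CommGroup H] (f : G →* H)
    (hf : Function.Surjective f) : Function.Surjective (qtensor f) := by
  apply LinearMap.lTensor_surjective
  intro y
  obtain ⟨x, hx⟩ := hf y.toMul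
  exact ⟨Additive.ofMul x, by simpa using congrArg Additive.ofMul hx⟩

lemma subsingleton_qtensor_of_torsion {G : Type u} [CommGroup G]
    (h : ∀ g : G, ∃ n : ℕ, 0 < n ∧ g ^ n = 1) : Subsingleton (ℚ ⊗[ℤ] Additive G) := by
  constructor
  have key : ∀ z : ℚ ⊗[ℤ] Additive G, z = 0 := by
    intro z
    induction z using TensorProduct.induction_on with
    | zero => rfl
    | tmul q m =>
      obtain ⟨n, hn, hm⟩ := h m.toMul
      have hnm : (n : ℤ) • m = 0 := by
        have : m.toMul ^ (n : ℤ) = 1 := by rw [zpow_natCast, hm]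
        simpa using congrArg Additive.ofMul this
      have h1 : (n : ℤ) • ((q / n) ⊗ₜ[ℤ] m) = (q / n) ⊗ₜ[ℤ] ((n : ℤ) • m) :=
        (TensorProduct.tmul_smul _ _ _).symm
      have h2 : (n : ℤ) • ((q / n) ⊗ₜ[ℤ] m) = q ⊗ₜ[ℤ] m := by
        rw [TensorProduct.smul_tmul', zsmul_eq_mul]
        congr 1
        push_cast
        field_simp
      rw [← h2, h1, hnm, TensorProduct.tmul_zero]
    | add x y hx hy => rw [hx, hy, add_zero]
  intro a b; rw [key a, key b]
end Toolkit

section T3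
/-- Additive of a product. -/
def additiveProdEquiv (G H : Type*) [CommGroup G] [CommGroup H] :
    Additive (G × H) ≃+ Additive G × Additive H where
  toFun x := (Additive.ofMul (Additive.toMul x).1, Additive.ofMul (Additive.toMul x).2)
  invFun x := Additive.ofMul ((Additive.toMul x.1), (Additive.toMul x.2))
  left_inv _ := rfl
  right_inv _ := rfl
  map_add' _ _ := rfl

lemma rank_qtensor_congr {G H : Type u} [CommGroup G] [CommGroup H] (e : G ≃* H) :
    Module.rank ℚ (ℚ ⊗[ℤ] Additive G) = Module.rank ℚ (ℚ ⊗[ℤ] Additive H) :=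
  rank_eq_of_addEquiv (TensorProduct.congr (LinearEquiv.refl ℤ ℚ)
      (MulEquiv.toAdditive e).toIntLinearEquiv).toAddEquiv

lemma rank_qtensor_prod {G H : Type u} [CommGroup G] [CommGroup H] :
    Module.rank ℚ (ℚ ⊗[ℤ] Additive (G × H))
      = Module.rank ℚ (ℚ ⊗[ℤ] Additive G) + Module.rank ℚ (ℚ ⊗[ℤ] Additive H) := by
  rw [rank_eq_of_addEquiv (TensorProduct.congr (LinearEquiv.refl ℤ ℚ)
      (additiveProdEquiv G H).toIntLinearEquiv).toAddEquiv,
    rank_eq_of_addEquiv (TensorProduct.prodRight ℤ ℚ ℚ (Additive G) (Additive H)).toAddEquiv,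
    rank_prod']

section Exact
variable {G H : Type u} [CommGroup G] [CommGroup H] (f : G →* H)

lemma exact_subtype_additive :
    Function.Exact (AddMonoidHom.toIntLinearMap (MonoidHom.toAdditive f.ker.subtype))
      (AddMonoidHom.toIntLinearMap (MonoidHom.toAdditive f)) := by
  intro y
  constructor
  · intro hy
    have hy' : f (Additive.toMul y) = 1 := by
      simpa using congrArg Additive.toMul hy
    exact ⟨Additive.ofMul ⟨Additive.toMul y, hy'⟩, rfl⟩
  · rintro ⟨x, rfl⟩
    have h1 : f ((Additive.toMul x : ↥f.ker) : G) = 1 := (Additive.toMul x : ↥f.ker).2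
    simpa using congrArg Additive.ofMul h1

lemma additive_surjective (hf : Function.Surjective f) :
    Function.Surjective (AddMonoidHom.toIntLinearMap (MonoidHom.toAdditive f)) := by
  intro y
  obtain ⟨x, hx⟩ := hf (Additive.toMul y)
  exact ⟨Additive.ofMul x, by simpa using congrArg Additive.ofMul hx⟩

lemma qtensor_exact (hf : Function.Surjective f) :
    Function.Exact (qtensor (G := ↥f.ker) f.ker.subtype) (qtensor f) :=
  lTensor_exact ℚ (exact_subtype_additive f) (additive_surjective f hf)

lemma qtensor_ker_injective : Function.Injective (qtensor (G := ↥f.ker) f.ker.subtype) := by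
  apply Module.Flat.lTensor_preserves_injective_linearMap
  intro a b hab
  have : (Additive.toMul a : ↥f.ker) = Additive.toMul b := by
    exact Subtype.ext (by simpa using congrArg Additive.toMul hab)
  simpa using congrArg Additive.ofMul this

lemma rank_qtensor_eq_of_torsion_ker (hf : Function.Surjective f)
    (ht : ∀ g ∈ f.ker, ∃ n : ℕ, 0 < n ∧ g ^ n = 1) :
    Module.rank ℚ (ℚ ⊗[ℤ] Additive G) = Module.rank ℚ (ℚ ⊗[ℤ] Additive H) := by
  have hsub : Subsingleton (ℚ ⊗[ℤ] Additive ↥f.ker) :=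
    subsingleton_qtensor_of_torsion (fun g => by
      obtain ⟨n, hn, hgn⟩ := ht g.1 g.2
      exact ⟨n, hn, Subtype.ext (by simpa using hgn)⟩)
  have hker : LinearMap.ker (qtensor f) = ⊥ := by
    rw [(qtensor_exact f hf).linearMap_ker_eq]
    have : (qtensor (G := ↥f.ker) f.ker.subtype) = 0 :=
      LinearMap.ext (fun x => by rw [Subsingleton.elim x 0]; simp)
    rw [this, LinearMap.range_zero]
  have hbij : Function.Bijective (qtensor f) :=
    ⟨LinearMap.ker_eq_bot.mp hker, qtensor_surjective f hf⟩
  exact rank_eq_of_addEquiv (LinearEquiv.ofBijective _ hbij).toAddEquiv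

lemma rank_qtensor_of_surjective (hf : Function.Surjective f) :
    Module.rank ℚ (ℚ ⊗[ℤ] Additive G)
      = Module.rank ℚ (ℚ ⊗[ℤ] Additive ↥f.ker) + Module.rank ℚ (ℚ ⊗[ℤ] Additive H) := by
  set tfq := ((qtensor f).toAddMonoidHom).toRatLinearMap with htfq
  have hcoe : ⇑tfq = ⇑(qtensor f) := rfl
  have hrange : LinearMap.range tfq = ⊤ := by
    rw [LinearMap.range_eq_top, hcoe]
    exact qtensor_surjective f hf
  have h1 : Module.rank ℚ (LinearMap.range tfq) + Module.rank ℚ (LinearMap.ker tfq)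
      = Module.rank ℚ (ℚ ⊗[ℤ] Additive G) := LinearMap.rank_range_add_rank_ker tfq
  have hkerq : ∀ x, x ∈ LinearMap.ker tfq ↔ x ∈ LinearMap.ker (qtensor f) := by
    intro x; simp [LinearMap.mem_ker, hcoe]
  have hexact := qtensor_exact f hf
  -- build AddEquiv from ℚ ⊗ Additive ker f to the kernel submodule
  have hmem : ∀ x : ℚ ⊗[ℤ] Additive ↥f.ker,
      (qtensor (G := ↥f.ker) f.ker.subtype) x ∈ LinearMap.ker tfq := by
    intro x
    rw [hkerq, (hexact).linearMap_ker_eq]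
    exact ⟨x, rfl⟩
  have hinj := qtensor_ker_injective f
  let e : (ℚ ⊗[ℤ] Additive ↥f.ker) ≃+ ↥(LinearMap.ker tfq) :=
    AddEquiv.ofBijective
      (AddMonoidHom.mk' (fun x => ⟨(qtensor (G := ↥f.ker) f.ker.subtype) x, hmem x⟩)
        (fun a b => Subtype.ext (map_add _ a b)))
      ⟨fun a b hab => hinj (congrArg Subtype.val hab), by
        rintro ⟨y, hy⟩
        rw [hkerq, (hexact).linearMap_ker_eq] at hy
        obtain ⟨x, hx⟩ := hy
        exact ⟨x, Subtype.ext hx⟩⟩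
  have h2 : Module.rank ℚ (↥(LinearMap.ker tfq)) = Module.rank ℚ (ℚ ⊗[ℤ] Additive ↥f.ker) :=
    rank_eq_of_addEquiv e.symm
  rw [← h1, hrange, rank_top, h2, add_comm]

end Exact
end T3

namespace SP
open Pointwise
open scoped commutatorElement
variable {Γ Q : Type u} [Group Γ] [Group Q] (η : Γ →* Q) {X : Type u} (p : FreeGroup X →* Γ)

/-- Quotients by subgroups containing the commutator subgroup are commutative. -/
def commGroupQuotientOfLe {G : Type*} [Group G] (N : Subgroup G) [N.Normal]
    (h : commutator G ≤ N) : CommGroup (G ⧸ N) :=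
  { (QuotientGroup.Quotient.group N) with
    mul_comm := fun a b => by
      induction a using QuotientGroup.induction_on with | H x =>
      induction b using QuotientGroup.induction_on with | H y =>
      rw [← QuotientGroup.mk_mul, ← QuotientGroup.mk_mul, QuotientGroup.eq]
      have hxy : (x*y)⁻¹ * (y*x) = ⁅y⁻¹, x⁻¹⁆ := by
        rw [commutatorElement_def]; group
      rw [hxy]
      exact h (Subgroup.commutator_mem_commutator (Subgroup.mem_top _) (Subgroup.mem_top _)) }

abbrev sR : Subgroup (FreeGroup X) := p.ker
abbrev sS : Subgroup (FreeGroup X) := (η.comp p).ker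
abbrev sC (X' : Type u) : Subgroup (FreeGroup X') := commutator (FreeGroup X')
abbrev sD : Subgroup (FreeGroup X) := ⁅(⊤ : Subgroup (FreeGroup X)), (η.comp p).ker⁆

lemma sR_le_sS : sR p ≤ sS η p := fun x hx => by
  simp only [MonoidHom.mem_ker, MonoidHom.comp_apply] at *
  rw [hx, map_one]

lemma sD_le_sS : sD η p ≤ sS η p := Subgroup.commutator_le_right _ _

lemma sD_le_sC : sD η p ≤ sC X := Subgroup.commutator_mono le_top le_top

def grpA : Type u := FreeGroup X ⧸ (sR p ⊔ sC X)

noncomputable instance : CommGroup (grpA p) := by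
  unfold grpA; exact commGroupQuotientOfLe _ le_sup_right

def grpB : Type u := ↥(sS η p) ⧸ ((sR p ⊔ sD η p).subgroupOf (sS η p))

noncomputable instance : CommGroup (grpB η p) := by
  unfold grpB
  refine commGroupQuotientOfLe _ ?_
  refine Subgroup.commutator_le.mpr fun g₁ _ g₂ _ => ?_
  rw [Subgroup.mem_subgroupOf]
  exact Subgroup.mem_sup_right
    (Subgroup.commutator_mem_commutator (Subgroup.mem_top _) g₂.2)

noncomputable instance : CommGroup (hopfH2 (η.comp p)) := by
  unfold hopfH2
  refine commGroupQuotientOfLe _ ?_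
  refine Subgroup.commutator_le.mpr fun g₁ _ g₂ _ => ?_
  rw [Subgroup.mem_subgroupOf]
  exact Subgroup.commutator_mem_commutator (Subgroup.mem_top _) (Subgroup.mem_inf.mp g₂.2).1

noncomputable def mkA : FreeGroup X →* grpA p :=
  (QuotientGroup.mk' (sR p ⊔ sC X) : FreeGroup X →* FreeGroup X ⧸ (sR p ⊔ sC X))

noncomputable def mkB : ↥(sS η p) →* grpB η p :=
  (QuotientGroup.mk' ((sR p ⊔ sD η p).subgroupOf (sS η p)) :
    ↥(sS η p) →* ↥(sS η p) ⧸ ((sR p ⊔ sD η p).subgroupOf (sS η p)))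

lemma mkA_eq_one_iff (x : FreeGroup X) : mkA p x = 1 ↔ x ∈ sR p ⊔ sC X :=
  QuotientGroup.eq_one_iff x

lemma mkB_eq_one_iff (x : ↥(sS η p)) : mkB η p x = 1 ↔ (x : FreeGroup X) ∈ sR p ⊔ sD η p :=
  (QuotientGroup.eq_one_iff x).trans Subgroup.mem_subgroupOf

lemma mkB_eq_iff (x y : ↥(sS η p)) :
    mkB η p x = mkB η p y ↔ ((x⁻¹ * y : ↥(sS η p)) : FreeGroup X) ∈ sR p ⊔ sD η p := by
  rw [← inv_mul_eq_one (a := mkB η p x), ← map_inv, ← map_mul, mkB_eq_one_iff]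

noncomputable def homφ : grpB η p →* grpA p :=
  QuotientGroup.lift ((sR p ⊔ sD η p).subgroupOf (sS η p))
    ((mkA p).comp (sS η p).subtype)
    (fun x hx => by
      rw [MonoidHom.mem_ker, MonoidHom.comp_apply, Subgroup.coe_subtype, mkA_eq_one_iff]
      exact sup_le_sup_left (sD_le_sC η p) _ (Subgroup.mem_subgroupOf.mp hx))

lemma homφ_mkB (x : ↥(sS η p)) : homφ η p (mkB η p x) = mkA p (x : FreeGroup X) := rfl

lemma exists_decomp_sup {G : Type*} [Group G] (H N : Subgroup G) [N.Normal]
    {x : G} (hx : x ∈ N ⊔ H) : ∃ n ∈ N, ∃ h ∈ H, x = n * h := by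
  have : x ∈ ((N : Set G) * (H : Set G)) := by
    have h0 : x ∈ (↑(N ⊔ H) : Set G) := hx
    rwa [Subgroup.normal_mul] at h0
  obtain ⟨n, hn, h, hh, hnh⟩ := this
  exact ⟨n, hn, h, hh, hnh.symm⟩

lemma exists_decomp_sup' {G : Type*} [Group G] (H N : Subgroup G) [N.Normal]
    {x : G} (hx : x ∈ H ⊔ N) : ∃ h ∈ H, ∃ n ∈ N, x = h * n := by
  have : x ∈ ((H : Set G) * (N : Set G)) := by
    have h0 : x ∈ (↑(H ⊔ N) : Set G) := hx
    rwa [Subgroup.mul_normal] at h0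
  obtain ⟨h, hh, n, hn, hnh⟩ := this
  exact ⟨h, hh, n, hn, hnh.symm⟩

lemma exists_sS_mul_sC (hq : Function.Surjective (η.comp p)) (hperf : commutator Q = ⊤)
    (f : FreeGroup X) : ∃ s ∈ sS η p, ∃ c ∈ sC X, f = s * c := by
  have hmaptop : Subgroup.map (η.comp p) ⊤ = ⊤ := by
    rw [← MonoidHom.range_eq_map, MonoidHom.range_eq_top]; exact hq
  have hmap : Subgroup.map (η.comp p) (sC X) = ⊤ := by
    have h2 : Subgroup.map (η.comp p) ⁅(⊤ : Subgroup (FreeGroup X)), ⊤⁆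
        = ⁅(⊤ : Subgroup Q), ⊤⁆ := by rw [Subgroup.map_commutator, hmaptop]
    rw [← hperf]; exact h2
  have : (η.comp p) f ∈ Subgroup.map (η.comp p) (sC X) := by
    rw [hmap]; exact Subgroup.mem_top _
  obtain ⟨c, hc, hqc⟩ := this
  refine ⟨f * c⁻¹, ?_, c, hc, by group⟩
  rw [MonoidHom.mem_ker, map_mul, map_inv, hqc, mul_inv_cancel]

lemma homφ_surjective (hq : Function.Surjective (η.comp p)) (hperf : commutator Q = ⊤) :
    Function.Surjective (homφ η p) := by
  intro a
  obtain ⟨f, rfl⟩ := QuotientGroup.mk'_surjective (sR p ⊔ sC X) a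
  obtain ⟨s, hs, c, hc, rfl⟩ := exists_sS_mul_sC η p hq hperf f
  refine ⟨mkB η p ⟨s, hs⟩, ?_⟩
  rw [homφ_mkB]
  show mkA p s = mkA p (s * c)
  rw [← inv_mul_eq_one, ← map_inv, ← map_mul, mkA_eq_one_iff]
  exact Subgroup.mem_sup_right (by
    have : s⁻¹ * (s * c) = c := by group
    rw [this]; exact hc)

/-- The comparison map from the Hopf `H₂` of `Q` to the kernel of `homφ`. -/
noncomputable def homχ : hopfH2 (η.comp p) →* ↥(homφ η p).ker := by
  unfold hopfH2
  refine QuotientGroup.lift _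
    (MonoidHom.codRestrict ((mkB η p).comp (Subgroup.inclusion inf_le_left)) _ ?_) ?_
  · intro x
    rw [MonoidHom.mem_ker, MonoidHom.comp_apply, homφ_mkB]
    rw [mkA_eq_one_iff]
    exact Subgroup.mem_sup_right (Subgroup.mem_inf.mp x.2).2
  · intro x hx
    refine Subtype.ext ?_
    show mkB η p (Subgroup.inclusion inf_le_left x) = 1
    rw [mkB_eq_one_iff]
    exact Subgroup.mem_sup_right (Subgroup.mem_subgroupOf.mp hx)

lemma homχ_mk (x : ↥((η.comp p).ker ⊓ commutator (FreeGroup X))) :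
    (homχ η p (QuotientGroup.mk x) : grpB η p)
      = mkB η p ⟨(x : FreeGroup X), (Subgroup.mem_inf.mp x.2).1⟩ := rfl

lemma homχ_surjective : Function.Surjective (homχ η p) := by
  rintro ⟨b, hb⟩
  obtain ⟨⟨s, hs⟩, rfl⟩ := QuotientGroup.mk'_surjective _ b
  replace hb := MonoidHom.mem_ker.mp hb
  have hb' : mkA p s = 1 := hb
  rw [mkA_eq_one_iff] at hb'
  obtain ⟨r, hr, c, hc, rfl⟩ := exists_decomp_sup (sC X) (sR p) hb'
  have hcS : c ∈ sS η p := by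
    have h1 : r ∈ sS η p := sR_le_sS η p hr
    have : c = r⁻¹ * (r * c) := by group
    rw [this]; exact mul_mem (inv_mem h1) hs
  refine ⟨QuotientGroup.mk ⟨c, Subgroup.mem_inf.mpr ⟨hcS, hc⟩⟩, ?_⟩
  ext
  rw [homχ_mk]
  show mkB η p _ = mkB η p _
  rw [mkB_eq_iff]
  show c⁻¹ * (r * c) ∈ _
  have : c⁻¹ * (r * c) = c⁻¹ * r * c := by group
  rw [this]
  exact Subgroup.mem_sup_left ((MonoidHom.normal_ker p).conj_mem' r hr c)

lemma homχ_ker_torsion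
    (hzero : ∀ x (hx1 : x ∈ (η.comp p).ker) (hx2 : x ∈ commutator (FreeGroup X)),
      x ∈ p.ker →
        ∃ N : ℕ, 0 < N ∧
          ((QuotientGroup.mk
              (⟨x, Subgroup.mem_inf.mpr ⟨hx1, hx2⟩⟩ :
                ↥((η.comp p).ker ⊓ commutator (FreeGroup X)))) : hopfH2 (η.comp p)) ^ N = 1) :
    ∀ z ∈ (homχ η p).ker, ∃ n : ℕ, 0 < n ∧ z ^ n = 1 := by
  intro z hz
  obtain ⟨x, rfl⟩ := QuotientGroup.mk'_surjective
    (⁅(⊤ : Subgroup (FreeGroup X)), (η.comp p).ker⁆.subgroupOf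
      ((η.comp p).ker ⊓ commutator (FreeGroup X))) z
  replace hz := MonoidHom.mem_ker.mp hz
  have hz' : (homχ η p (QuotientGroup.mk' _ x) : grpB η p) = 1 := by
    rw [hz]; rfl
  rw [QuotientGroup.mk'_apply, homχ_mk, mkB_eq_one_iff] at hz'
  rw [sup_comm] at hz'
  obtain ⟨d, hd, r, hr, hxdr⟩ := exists_decomp_sup (sR p) (sD η p) hz'
  have hrS : r ∈ (η.comp p).ker := sR_le_sS η p hr
  have hrC : r ∈ commutator (FreeGroup X) := by
    have : r = d⁻¹ * (x : FreeGroup X) := by rw [hxdr]; group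
    rw [this]
    exact mul_mem (inv_mem (sD_le_sC η p hd)) (Subgroup.mem_inf.mp x.2).2
  obtain ⟨N, hN, hpow⟩ := hzero r hrS hrC hr
  refine ⟨N, hN, ?_⟩
  have hxr : (QuotientGroup.mk' _ x : hopfH2 (η.comp p))
      = QuotientGroup.mk (⟨r, Subgroup.mem_inf.mpr ⟨hrS, hrC⟩⟩ :
          ↥((η.comp p).ker ⊓ commutator (FreeGroup X))) := by
    rw [QuotientGroup.mk'_apply, QuotientGroup.eq]
    rw [Subgroup.mem_subgroupOf]
    have : ((x⁻¹ * ⟨r, Subgroup.mem_inf.mpr ⟨hrS, hrC⟩⟩ :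
        ↥((η.comp p).ker ⊓ commutator (FreeGroup X))) : FreeGroup X)
        = (x : FreeGroup X)⁻¹ * r := rfl
    rw [this]
    have h2 : (x : FreeGroup X)⁻¹ * r = r⁻¹ * d⁻¹ * r := by rw [hxdr]; group
    rw [h2]
    exact Subgroup.Normal.conj_mem' inferInstance _ (inv_mem hd) r
  rw [hxr]; exact hpow

/-- The diagonal homomorphism into the fibre product. -/
noncomputable def diagT : FreeGroup X →* ↥(fibreProduct (η.comp p)) :=
  MonoidHom.codRestrict ((MonoidHom.id _).prod (MonoidHom.id _)) _ (fun _ => rfl)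

lemma diag_mem_commutator {c : FreeGroup X} (hc : c ∈ sC X) :
    diagT η p c ∈ commutator ↥(fibreProduct (η.comp p)) := by
  have h : Subgroup.map (diagT η p) ⁅(⊤ : Subgroup (FreeGroup X)), ⊤⁆
      ≤ ⁅(⊤ : Subgroup ↥(fibreProduct (η.comp p))), ⊤⁆ := by
    rw [Subgroup.map_commutator]
    exact Subgroup.commutator_mono le_top le_top
  exact h ⟨c, hc, rfl⟩

lemma mem_sS_fibre {s : FreeGroup X} (hs : s ∈ sS η p) :
    ((1 : FreeGroup X), s) ∈ fibreProduct (η.comp p) := by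
  show (η.comp p) 1 = (η.comp p) s
  rw [map_one, show (η.comp p) s = 1 from hs]

lemma inr_mem_commutator {d : FreeGroup X} (hd : d ∈ sD η p)
    (h : ((1 : FreeGroup X), d) ∈ fibreProduct (η.comp p)) :
    (⟨((1 : FreeGroup X), d), h⟩ : ↥(fibreProduct (η.comp p)))
      ∈ commutator ↥(fibreProduct (η.comp p)) := by
  have key : sD η p ≤ Subgroup.comap (MonoidHom.inr (FreeGroup X) (FreeGroup X))
      (Subgroup.map (fibreProduct (η.comp p)).subtype
        (commutator ↥(fibreProduct (η.comp p)))) := by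
    refine Subgroup.commutator_le.mpr fun g₁ _ g₂ hg₂ => ?_
    rw [Subgroup.mem_comap]
    refine ⟨⁅diagT η p g₁, ⟨((1 : FreeGroup X), g₂), mem_sS_fibre η p hg₂⟩⁆,
      Subgroup.commutator_mem_commutator (Subgroup.mem_top _) (Subgroup.mem_top _), ?_⟩
    show ((⁅diagT η p g₁, (⟨((1 : FreeGroup X), g₂), mem_sS_fibre η p hg₂⟩ :
        ↥(fibreProduct (η.comp p)))⁆ : ↥(fibreProduct (η.comp p))) : FreeGroup X × FreeGroup X)
      = ((1 : FreeGroup X), ⁅g₁, g₂⁆)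
    have hcoe : ((⁅diagT η p g₁, (⟨((1 : FreeGroup X), g₂), mem_sS_fibre η p hg₂⟩ :
        ↥(fibreProduct (η.comp p)))⁆ : ↥(fibreProduct (η.comp p))) : FreeGroup X × FreeGroup X)
        = ⁅((g₁, g₁) : FreeGroup X × FreeGroup X), ((1 : FreeGroup X), g₂)⁆ := rfl
    rw [hcoe]
    have : (⁅((g₁, g₁) : FreeGroup X × FreeGroup X), ((1 : FreeGroup X), g₂)⁆ :
        FreeGroup X × FreeGroup X) = (⁅g₁, (1:FreeGroup X)⁆, ⁅g₁, g₂⁆) := rfl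
    rw [this, commutatorElement_one_right]
  have := key hd
  rw [Subgroup.mem_comap] at this
  obtain ⟨w, hw, hval⟩ := this
  have : (⟨((1 : FreeGroup X), d), h⟩ : ↥(fibreProduct (η.comp p))) = w :=
    Subtype.ext (by
      simp only [Subgroup.coe_subtype] at hval
      exact hval.symm)
  rw [this]
  exact hw

/-- The projection from the free fibre product onto `Λ`. -/
noncomputable def homψ : ↥(fibreProduct (η.comp p)) →* ↥(fibreProduct η) :=
  MonoidHom.codRestrict ((p.prodMap p).domRestrict (fibreProduct (η.comp p)))
    (fibreProduct η) (fun t => by exact t.2)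

lemma homψ_surjective (hp : Function.Surjective p) : Function.Surjective (homψ η p) := by
  rintro ⟨⟨a, b⟩, hab⟩
  obtain ⟨f, rfl⟩ := hp a
  obtain ⟨g, rfl⟩ := hp b
  exact ⟨⟨(f, g), hab⟩, rfl⟩

lemma mem_sS_of_fibre {f g : FreeGroup X} (h : (f, g) ∈ fibreProduct (η.comp p)) :
    f⁻¹ * g ∈ sS η p := by
  have h' : (η.comp p) f = (η.comp p) g := h
  rw [MonoidHom.mem_ker, map_mul, map_inv, h', inv_mul_cancel]

/-- The map realising `Λ^{ab}` as `A × B`. -/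
noncomputable def homθ : ↥(fibreProduct (η.comp p)) →* grpA p × grpB η p where
  toFun t := (mkA p t.1.1,
    mkB η p ⟨(t.1.1)⁻¹ * t.1.2, mem_sS_of_fibre η p t.2⟩)
  map_one' := by
    refine Prod.ext (by simp) ?_
    show mkB η p _ = 1
    rw [mkB_eq_one_iff]
    show (1 : FreeGroup X)⁻¹ * 1 ∈ sR p ⊔ sD η p
    simpa using Subgroup.one_mem _
  map_mul' t t' := by
    obtain ⟨⟨x, z⟩, hxz⟩ := t
    obtain ⟨⟨y, w⟩, hyw⟩ := t'
    refine Prod.ext (by exact map_mul (mkA p) x y) ?_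
    show mkB η p _ = mkB η p _ * mkB η p _
    rw [← map_mul, mkB_eq_iff]
    show ((x * y)⁻¹ * (z * w))⁻¹ * ((x⁻¹ * z) * (y⁻¹ * w)) ∈ sR p ⊔ sD η p
    have hval : ((x * y)⁻¹ * (z * w))⁻¹ * ((x⁻¹ * z) * (y⁻¹ * w))
        = (y⁻¹ * w)⁻¹ * ⁅y⁻¹, (x⁻¹ * z)⁻¹⁆ * (y⁻¹ * w) := by
      rw [commutatorElement_def]; group
    rw [hval]
    exact Subgroup.mem_sup_right (Subgroup.Normal.conj_mem' inferInstance _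
      (Subgroup.commutator_mem_commutator (Subgroup.mem_top _)
        (inv_mem (mem_sS_of_fibre η p hxz))) _)

lemma homθ_surjective : Function.Surjective (homθ η p) := by
  rintro ⟨a, b⟩
  obtain ⟨f, rfl⟩ := QuotientGroup.mk'_surjective (sR p ⊔ sC X) a
  obtain ⟨⟨s, hs⟩, rfl⟩ := QuotientGroup.mk'_surjective ((sR p ⊔ sD η p).subgroupOf (sS η p)) b
  have hmem : (f, f * s) ∈ fibreProduct (η.comp p) := by
    show (η.comp p) f = (η.comp p) (f * s)
    rw [map_mul, show (η.comp p) s = 1 from hs, mul_one]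
  refine ⟨⟨(f, f * s), hmem⟩, Prod.ext rfl ?_⟩
  show mkB η p _ = mkB η p _
  rw [mkB_eq_iff]
  show (f⁻¹ * (f * s))⁻¹ * s ∈ sR p ⊔ sD η p
  have hone : (f⁻¹ * (f * s))⁻¹ * s = 1 := by group
  rw [hone]
  exact Subgroup.one_mem _

lemma ker_homψ : (homψ η p).ker
    = ((sR p).prod (sR p)).subgroupOf (fibreProduct (η.comp p)) := by
  ext t
  rw [MonoidHom.mem_ker, Subgroup.mem_subgroupOf, Subgroup.mem_prod]
  constructor
  · intro h
    have h1 := congrArg (Subtype.val : ↥(fibreProduct η) → Γ × Γ) h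
    exact ⟨show p t.1.1 = 1 from congrArg Prod.fst h1,
      show p t.1.2 = 1 from congrArg Prod.snd h1⟩
  · rintro ⟨h1, h2⟩
    refine Subtype.ext (Prod.ext ?_ ?_)
    · exact h1
    · exact h2

lemma ker_homθ : (homθ η p).ker
    = commutator ↥(fibreProduct (η.comp p))
        ⊔ ((sR p).prod (sR p)).subgroupOf (fibreProduct (η.comp p)) := by
  refine le_antisymm ?_ (sup_le ?_ ?_)
  · rintro ⟨⟨f, g⟩, hfg⟩ ht
    rw [MonoidHom.mem_ker] at ht
    have h1 : mkA p f = 1 := congrArg Prod.fst ht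
    have h2 : mkB η p ⟨f⁻¹ * g, mem_sS_of_fibre η p hfg⟩ = 1 := congrArg Prod.snd ht
    rw [mkA_eq_one_iff] at h1
    rw [mkB_eq_one_iff] at h2
    obtain ⟨r, hr, c, hc, hfrc⟩ := exists_decomp_sup (sC X) (sR p) h1
    rw [sup_comm] at h2
    have h2' : f⁻¹ * g ∈ sD η p ⊔ sR p := h2
    obtain ⟨d, hd, r₂, hr₂, hdr⟩ := exists_decomp_sup (sR p) (sD η p) h2'
    have hgval : g = r * c * (d * r₂) := by
      rw [← hdr, ← hfrc]; group
    have hrS : r ∈ sS η p := sR_le_sS η p hr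
    have hr2S : r₂ ∈ sS η p := sR_le_sS η p hr₂
    have ht1mem : ((c : FreeGroup X), c) ∈ fibreProduct (η.comp p) := rfl
    have ht2mem : ((1 : FreeGroup X), d) ∈ fibreProduct (η.comp p) :=
      mem_sS_fibre η p (sD_le_sS η p hd)
    have ht3mem : ((c⁻¹ * r * c, d⁻¹ * c⁻¹ * r * c * d * r₂) : FreeGroup X × FreeGroup X)
        ∈ fibreProduct (η.comp p) := by
      show (η.comp p) (c⁻¹ * r * c) = (η.comp p) (d⁻¹ * c⁻¹ * r * c * d * r₂)
      have m1 : c⁻¹ * r * c ∈ sS η p :=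
        Subgroup.Normal.conj_mem' inferInstance _ hrS c
      have m2 : d⁻¹ * c⁻¹ * r * c * d * r₂ ∈ sS η p := by
        have : d⁻¹ * c⁻¹ * r * c * d * r₂ = d⁻¹ * (c⁻¹ * r * c) * d * r₂ := by group
        rw [this]
        exact mul_mem (by
          have h3 : d⁻¹ * (c⁻¹ * r * c) * d ∈ sS η p :=
            Subgroup.Normal.conj_mem' inferInstance _ m1 d
          exact h3) hr2S
      rw [show (η.comp p) (c⁻¹ * r * c) = 1 from m1,
        show (η.comp p) (d⁻¹ * c⁻¹ * r * c * d * r₂) = 1 from m2]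
    have hprod : (⟨(f, g), hfg⟩ : ↥(fibreProduct (η.comp p)))
        = diagT η p c * ⟨((1 : FreeGroup X), d), ht2mem⟩ * ⟨_, ht3mem⟩ := by
      refine Subtype.ext (Prod.ext ?_ ?_)
      · show f = c * 1 * (c⁻¹ * r * c)
        rw [hfrc]; group
      · show g = c * d * (d⁻¹ * c⁻¹ * r * c * d * r₂)
        rw [hgval]; group
    rw [hprod]
    refine mul_mem (mul_mem ?_ ?_) ?_
    · exact Subgroup.mem_sup_left (diag_mem_commutator η p hc)
    · exact Subgroup.mem_sup_left (inr_mem_commutator η p hd ht2mem)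
    · refine Subgroup.mem_sup_right ?_
      rw [Subgroup.mem_subgroupOf, Subgroup.mem_prod]
      constructor
      · show c⁻¹ * r * c ∈ sR p
        exact Subgroup.Normal.conj_mem' inferInstance _ hr c
      · show d⁻¹ * c⁻¹ * r * c * d * r₂ ∈ sR p
        have heq : d⁻¹ * c⁻¹ * r * c * d * r₂ = d⁻¹ * (c⁻¹ * r * c) * d * r₂ := by group
        rw [heq]
        exact mul_mem (Subgroup.Normal.conj_mem' inferInstance _
          (Subgroup.Normal.conj_mem' inferInstance _ hr c) d) hr₂
  · exact Abelianization.commutator_subset_ker (homθ η p)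
  · intro t ht
    rw [Subgroup.mem_subgroupOf, Subgroup.mem_prod] at ht
    rw [MonoidHom.mem_ker]
    refine Prod.ext ?_ ?_
    · show mkA p t.1.1 = 1
      rw [mkA_eq_one_iff]
      exact Subgroup.mem_sup_left ht.1
    · show mkB η p _ = 1
      rw [mkB_eq_one_iff]
      exact Subgroup.mem_sup_left (mul_mem (inv_mem ht.1) ht.2)

lemma of_surjective {G : Type*} [Group G] :
    Function.Surjective (Abelianization.of (G := G)) := fun x =>
  QuotientGroup.induction_on x fun g => ⟨g, rfl⟩

lemma ker_ab_homψ (hp : Function.Surjective p) :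
    ((Abelianization.of).comp (homψ η p)).ker = (homθ η p).ker := by
  rw [← MonoidHom.comap_ker]
  have hkerof : (Abelianization.of (G := ↥(fibreProduct η))).ker
      = commutator ↥(fibreProduct η) := by
    ext x
    rw [MonoidHom.mem_ker]
    exact QuotientGroup.eq_one_iff x
  rw [hkerof]
  have hmaptop : Subgroup.map (homψ η p) ⊤ = ⊤ := by
    rw [← MonoidHom.range_eq_map, MonoidHom.range_eq_top]
    exact homψ_surjective η p hp
  have hcomm : commutator ↥(fibreProduct η)
      = Subgroup.map (homψ η p) (commutator ↥(fibreProduct (η.comp p))) := by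
    have h2 : Subgroup.map (homψ η p) ⁅(⊤ : Subgroup ↥(fibreProduct (η.comp p))), ⊤⁆
        = ⁅(⊤ : Subgroup ↥(fibreProduct η)), ⊤⁆ := by
      rw [Subgroup.map_commutator, hmaptop]
    exact h2.symm
  rw [hcomm, Subgroup.comap_map_eq, ker_homψ, ker_homθ]

noncomputable def equivAbΛ (hp : Function.Surjective p) :
    Abelianization ↥(fibreProduct η) ≃* grpA p × grpB η p :=
  ((QuotientGroup.quotientKerEquivOfSurjective ((Abelianization.of).comp (homψ η p))
      ((of_surjective).comp (homψ_surjective η p hp))).symm.trans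
    (QuotientGroup.quotientMulEquivOfEq (ker_ab_homψ η p hp))).trans
    (QuotientGroup.quotientKerEquivOfSurjective (homθ η p) (homθ_surjective η p))

noncomputable def equivAbΓ (hp : Function.Surjective p) :
    Abelianization Γ ≃* grpA p := by
  have hkerof : (Abelianization.of (G := Γ)).ker = commutator Γ := by
    ext x
    rw [MonoidHom.mem_ker]
    exact QuotientGroup.eq_one_iff x
  have hmaptop : Subgroup.map p ⊤ = ⊤ := by
    rw [← MonoidHom.range_eq_map, MonoidHom.range_eq_top]
    exact hp
  have hcomm : commutator Γ = Subgroup.map p (sC X) := by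
    have h2 : Subgroup.map p ⁅(⊤ : Subgroup (FreeGroup X)), ⊤⁆
        = ⁅(⊤ : Subgroup Γ), ⊤⁆ := by
      rw [Subgroup.map_commutator, hmaptop]
    exact h2.symm
  have hker : ((Abelianization.of).comp p).ker = sR p ⊔ sC X := by
    rw [← MonoidHom.comap_ker, hkerof, hcomm, Subgroup.comap_map_eq, sup_comm]
  exact ((QuotientGroup.quotientMulEquivOfEq hker.symm).trans
    (QuotientGroup.quotientKerEquivOfSurjective ((Abelianization.of).comp p)
      ((of_surjective).comp hp))).symm

end SP

/-- let `1 → K → Γ →^η Q → 1` be a short exact sequence with `Q`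
perfect such that the induced map `H₂(Γ;ℚ) → H₂(Q;ℚ)` is zero.  Then the fibre
product `Λ ≤ Γ × Γ` satisfies `b₁(Λ) = 2·b₁(Γ) + b₂(Q)`.

Here homology is computed via a free presentation `p : F ↠ Γ` (so `q = η ∘ p` is a
free presentation of `Q`), and the vanishing of `H₂(Γ;ℚ) → H₂(Q;ℚ)` is expressed by
the Hopf formula: every element of `ker p ∩ [F,F]` maps to a torsion element of
`H₂(Q;ℤ) = (ker q ∩ [F,F]) / [F, ker q]`. -/
theorem stmt_7 {Γ Q : Type u} [Group Γ] [Group Q] (η : Γ →* Q)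
    (hη : Function.Surjective η) (hperf : commutator Q = ⊤)
    (X : Type u) (p : FreeGroup X →* Γ) (hp : Function.Surjective p)
    (hzero : ∀ x (hx1 : x ∈ (η.comp p).ker) (hx2 : x ∈ commutator (FreeGroup X)),
      x ∈ p.ker →
        ∃ N : ℕ, 0 < N ∧
          ((QuotientGroup.mk
              (⟨x, Subgroup.mem_inf.mpr ⟨hx1, hx2⟩⟩ :
                ↥((η.comp p).ker ⊓ commutator (FreeGroup X)))) : hopfH2 (η.comp p)) ^ N = 1) :
    b1 (fibreProduct η) = 2 * b1 Γ + b2 (η.comp p) := by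
  have hq : Function.Surjective (η.comp p) := by
    have h : ⇑(η.comp p) = ⇑η ∘ ⇑p := rfl
    rw [h]
    exact hη.comp hp
  have hb1Γ : b1 Γ = Module.rank ℚ (ℚ ⊗[ℤ] Additive (SP.grpA p)) :=
    rank_qtensor_congr (SP.equivAbΓ p hp)
  have hb1Λ : b1 ↥(fibreProduct η)
      = Module.rank ℚ (ℚ ⊗[ℤ] Additive (SP.grpA p))
        + Module.rank ℚ (ℚ ⊗[ℤ] Additive (SP.grpB η p)) := by
    have h := rank_qtensor_congr (SP.equivAbΛ η p hp)
    rw [rank_qtensor_prod] at h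
    exact h
  have hB : Module.rank ℚ (ℚ ⊗[ℤ] Additive (SP.grpB η p))
      = Module.rank ℚ (ℚ ⊗[ℤ] Additive ↥(SP.homφ η p).ker)
        + Module.rank ℚ (ℚ ⊗[ℤ] Additive (SP.grpA p)) :=
    rank_qtensor_of_surjective (SP.homφ η p) (SP.homφ_surjective η p hq hperf)
  have hK : Module.rank ℚ (ℚ ⊗[ℤ] Additive (hopfH2 (η.comp p)))
      = Module.rank ℚ (ℚ ⊗[ℤ] Additive ↥(SP.homφ η p).ker) :=
    rank_qtensor_eq_of_torsion_ker (SP.homχ η p) (SP.homχ_surjective η p)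
      (SP.homχ_ker_torsion η p hzero)
  have hb2 : b2 (η.comp p) = Module.rank ℚ (ℚ ⊗[ℤ] Additive (hopfH2 (η.comp p))) :=
    rank_qtensor_congr (Abelianization.equivOfComm (H := hopfH2 (η.comp p))).symm
  show b1 ↥(fibreProduct η) = 2 * b1 Γ + b2 (η.comp p)
  rw [hb1Λ, hB, hb1Γ, hb2, ← hK, two_mul, add_assoc,
    add_comm (Module.rank ℚ (ℚ ⊗[ℤ] Additive (hopfH2 (η.comp p))))
      (Module.rank ℚ (ℚ ⊗[ℤ] Additive (SP.grpA p)))]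
end

section
/- Let Q = ⟨x₁,…,xₙ | r₁,…,rₘ⟩ be a finitely presented perfect group, let F be the free group on x₁,…,xₙ, and let R be the normal closure of {r₁,…,rₘ} in F. For each i choose c_i ∈ [F,F] with x_i c_i ∈ R. Then ⟨x₁,…,xₙ | x₁c₁,…,xₙcₙ, [x_i, r_j] (1 ≤ i ≤ n, 1 ≤ j ≤ m)⟩ presents the universal central extension of Q. -/
universe u

/-- A central extension of a group `Q`: a group `E` with a surjection `E → Q`
whose kernel is contained in the center of `E`. -/
structure CentralExtension (Q : Type u) [Group Q] : Type (u + 1) where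
  /-- the total group of the extension -/
  E : Type u
  /-- the group structure -/
  [grp : Group E]
  /-- the projection to `Q` -/
  π : E →* Q
  surj : Function.Surjective π
  central : π.ker ≤ Subgroup.center E

attribute [instance] CentralExtension.grp

open scoped commutatorElement

/-- If two homomorphisms differ pointwise by a central element, they agree on the
commutator subgroup. -/
lemma eq_on_commutator_of_central_diff {G E : Type*} [Group G] [Group E] (φ ψ : G →* E)
    (h : ∀ g, φ g * (ψ g)⁻¹ ∈ Subgroup.center E) :
    ∀ g ∈ commutator G, φ g = ψ g := by
  let δ : G →* E :=
    { toFun := fun g => φ g * (ψ g)⁻¹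
      map_one' := by simp
      map_mul' := fun a b => by
        have hzb := Subgroup.mem_center_iff.mp (h b)
        show φ (a * b) * (ψ (a * b))⁻¹ = (φ a * (ψ a)⁻¹) * (φ b * (ψ b)⁻¹)
        have e1 : φ (a * b) * (ψ (a * b))⁻¹
            = φ a * (φ b * (ψ b)⁻¹) * (ψ a)⁻¹ := by
          rw [map_mul, map_mul, mul_inv_rev]; group
        rw [e1, hzb (φ a), mul_assoc, ← hzb (φ a * (ψ a)⁻¹)] }
  have hker : commutator G ≤ δ.ker := by
    rw [commutator, Subgroup.commutator_le]
    intro g₁ _ g₂ _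
    rw [MonoidHom.mem_ker, map_commutatorElement, commutatorElement_eq_one_iff_mul_comm]
    exact (Subgroup.mem_center_iff.mp (h g₁) (δ g₂)).symm
  intro g hg
  have : δ g = 1 := hker hg
  exact mul_inv_eq_one.mp this

/-- let `Q = ⟨x₁,…,xₙ ∣ r₁,…,rₘ⟩` be a finitely presented perfect group,
`F` the free group on `x₁,…,xₙ`, `R` the normal closure of the `rⱼ`, and choose
`cᵢ ∈ [F,F]` with `xᵢcᵢ ∈ R`.  Then `⟨x₁,…,xₙ ∣ xᵢcᵢ, [xᵢ,rⱼ]⟩`, with its natural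
map to `Q`, is the universal central extension of `Q`. -/
theorem stmt_11 (n m : ℕ) (r : Fin m → FreeGroup (Fin n))
    (hperf : commutator (FreeGroup (Fin n) ⧸ Subgroup.normalClosure (Set.range r)) = ⊤)
    (c : Fin n → FreeGroup (Fin n))
    (hc : ∀ i, c i ∈ commutator (FreeGroup (Fin n)))
    (hcR : ∀ i, FreeGroup.of i * c i ∈ Subgroup.normalClosure (Set.range r))
    -- the relator set `{xᵢcᵢ} ∪ {[xᵢ, rⱼ] = xᵢ⁻¹ rⱼ⁻¹ xᵢ rⱼ}` :
    (T : Set (FreeGroup (Fin n)))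
    (hT : T = (Set.range fun i => FreeGroup.of i * c i) ∪
        (Set.range fun p : Fin n × Fin m =>
          (FreeGroup.of p.1)⁻¹ * (r p.2)⁻¹ * FreeGroup.of p.1 * r p.2))
    (hle : Subgroup.normalClosure T ≤
      (Subgroup.normalClosure (Set.range r)).comap (MonoidHom.id (FreeGroup (Fin n)))) :
    letI π : (FreeGroup (Fin n) ⧸ Subgroup.normalClosure T) →*
        (FreeGroup (Fin n) ⧸ Subgroup.normalClosure (Set.range r)) :=
      QuotientGroup.map _ _ (MonoidHom.id (FreeGroup (Fin n))) hle
    Function.Surjective π ∧ π.ker ≤ Subgroup.center _ ∧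
      ∀ D : CentralExtension (FreeGroup (Fin n) ⧸ Subgroup.normalClosure (Set.range r)),
        ∃! f : (FreeGroup (Fin n) ⧸ Subgroup.normalClosure T) →* D.E,
          D.π.comp f = π := by
  classical
  set π : (FreeGroup (Fin n) ⧸ Subgroup.normalClosure T) →*
      (FreeGroup (Fin n) ⧸ Subgroup.normalClosure (Set.range r)) :=
    QuotientGroup.map _ _ (MonoidHom.id (FreeGroup (Fin n))) hle with hπdef
  have hπmk : ∀ w : FreeGroup (Fin n), π (QuotientGroup.mk w)
      = (QuotientGroup.mk w : FreeGroup (Fin n) ⧸ Subgroup.normalClosure (Set.range r)) :=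
    fun w => QuotientGroup.map_mk _ _ (MonoidHom.id (FreeGroup (Fin n))) hle w
  -- Part 1: surjectivity
  have hsurj : Function.Surjective π := by
    intro q
    obtain ⟨w, rfl⟩ := QuotientGroup.mk_surjective q
    exact ⟨QuotientGroup.mk w, hπmk w⟩
  -- images of T are trivial in the quotient by the normal closure of T
  have hTone : ∀ x ∈ T,
      (QuotientGroup.mk x : FreeGroup (Fin n) ⧸ Subgroup.normalClosure T) = 1 := fun x hx =>
    (QuotientGroup.eq_one_iff x).mpr (Subgroup.subset_normalClosure hx)
  -- generation of the quotient by the images of the generators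
  have hgen : Subgroup.closure (Set.range fun i =>
      (QuotientGroup.mk (FreeGroup.of i) : FreeGroup (Fin n) ⧸ Subgroup.normalClosure T))
      = ⊤ := by
    have h1 : Subgroup.map (QuotientGroup.mk' (Subgroup.normalClosure T)) ⊤ = ⊤ :=
      Subgroup.map_top_of_surjective _ (QuotientGroup.mk'_surjective _)
    rw [← FreeGroup.closure_range_of (Fin n), MonoidHom.map_closure] at h1
    rw [← h1]
    congr 1
    rw [← Set.range_comp]
    rfl
  -- an element commuting with all generators is central in the quotient
  have hcentral_of_commute : ∀ z : FreeGroup (Fin n) ⧸ Subgroup.normalClosure T,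
      (∀ i, (QuotientGroup.mk (FreeGroup.of i) :
          FreeGroup (Fin n) ⧸ Subgroup.normalClosure T) * z
        = z * QuotientGroup.mk (FreeGroup.of i)) → z ∈ Subgroup.center _ := by
    intro z hz
    have htop : (⊤ : Subgroup (FreeGroup (Fin n) ⧸ Subgroup.normalClosure T))
        ≤ Subgroup.centralizer {z} := by
      rw [← hgen]
      apply (Subgroup.closure_le _).mpr
      rintro _ ⟨i, rfl⟩
      rw [SetLike.mem_coe, Subgroup.mem_centralizer_iff]
      rintro h hh
      rw [Set.mem_singleton_iff] at hh
      subst hh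
      exact (hz i).symm
    rw [Subgroup.mem_center_iff]
    intro g
    have hg : g ∈ Subgroup.centralizer {z} := htop (Subgroup.mem_top g)
    exact (Subgroup.mem_centralizer_iff.mp hg z rfl).symm
  -- each relator r j is central in the quotient
  have hrcentral : ∀ j, (QuotientGroup.mk (r j) :
      FreeGroup (Fin n) ⧸ Subgroup.normalClosure T) ∈ Subgroup.center _ := by
    intro j
    apply hcentral_of_commute
    intro i
    have h1 : (QuotientGroup.mk ((FreeGroup.of i)⁻¹ * (r j)⁻¹ * FreeGroup.of i * r j)
        : FreeGroup (Fin n) ⧸ Subgroup.normalClosure T) = 1 :=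
      hTone _ (by rw [hT]; exact Or.inr ⟨(i, j), rfl⟩)
    simp only [QuotientGroup.mk_mul, QuotientGroup.mk_inv] at h1
    have h2 := congrArg (fun x =>
      (QuotientGroup.mk (r j) : FreeGroup (Fin n) ⧸ Subgroup.normalClosure T)
        * QuotientGroup.mk (FreeGroup.of i) * x) h1
    simpa [mul_assoc, inv_mul_cancel_left, mul_inv_cancel_left] using h2
  -- Part 2: centrality of the kernel
  have hRcent : Subgroup.normalClosure (Set.range r)
      ≤ Subgroup.comap (QuotientGroup.mk' (Subgroup.normalClosure T)) (Subgroup.center _) := by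
    apply Subgroup.normalClosure_le_normal
    rintro x ⟨j, rfl⟩
    exact hrcentral j
  have hcent : π.ker ≤ Subgroup.center (FreeGroup (Fin n) ⧸ Subgroup.normalClosure T) := by
    intro g hg
    obtain ⟨w, rfl⟩ := QuotientGroup.mk_surjective g
    rw [MonoidHom.mem_ker, hπmk w] at hg
    exact hRcent ((QuotientGroup.eq_one_iff w).mp hg)
  refine ⟨hsurj, hcent, ?_⟩
  -- Part 3: universality
  intro D
  choose et het using fun i => D.surj (QuotientGroup.mk (FreeGroup.of i))
  set ψ : FreeGroup (Fin n) →* D.E := FreeGroup.lift et with hψdef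
  have hπψ : ∀ w : FreeGroup (Fin n), D.π (ψ w)
      = (QuotientGroup.mk w : FreeGroup (Fin n) ⧸ Subgroup.normalClosure (Set.range r)) := by
    have h1 : D.π.comp ψ = QuotientGroup.mk' (Subgroup.normalClosure (Set.range r)) := by
      apply FreeGroup.ext_hom
      intro i
      simp [hψdef, het i]
    intro w
    exact DFunLike.congr_fun h1 w
  have hψR : ∀ w ∈ Subgroup.normalClosure (Set.range r), ψ w ∈ Subgroup.center D.E :=
    fun w hw =>
      D.central (by rw [MonoidHom.mem_ker, hπψ]; exact (QuotientGroup.eq_one_iff w).mpr hw)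
  set z : Fin n → D.E := fun i => ψ (FreeGroup.of i * c i) with hzdef
  have hz : ∀ i, z i ∈ Subgroup.center D.E := fun i => hψR _ (hcR i)
  have hzker : ∀ i, D.π (z i) = 1 := fun i => by
    rw [hzdef]; rw [hπψ]; exact (QuotientGroup.eq_one_iff _).mpr (hcR i)
  set e : Fin n → D.E := fun i => ψ (FreeGroup.of i) * (z i)⁻¹ with hedef
  set φ : FreeGroup (Fin n) →* D.E := FreeGroup.lift e with hφdef
  have hφof : ∀ i, φ (FreeGroup.of i) = ψ (FreeGroup.of i) * (z i)⁻¹ := fun i => by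
    rw [hφdef]; exact FreeGroup.lift_apply_of
  -- φ and ψ differ by central elements everywhere
  have hdiff : ∀ w : FreeGroup (Fin n), φ w * (ψ w)⁻¹ ∈ Subgroup.center D.E := by
    have hmkZ : (QuotientGroup.mk' (Subgroup.center D.E)).comp φ
        = (QuotientGroup.mk' (Subgroup.center D.E)).comp ψ := by
      apply FreeGroup.ext_hom
      intro i
      simp only [MonoidHom.comp_apply, hφof i, map_mul, map_inv]
      have h0 : (QuotientGroup.mk' (Subgroup.center D.E)) (z i) = 1 :=
        (QuotientGroup.eq_one_iff _).mpr (hz i)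
      rw [h0, inv_one, mul_one]
    intro w
    have h1 := DFunLike.congr_fun hmkZ w
    simp only [MonoidHom.comp_apply] at h1
    have h2 : (QuotientGroup.mk' (Subgroup.center D.E)) (φ w * (ψ w)⁻¹) = 1 := by
      rw [map_mul, map_inv, h1, mul_inv_cancel]
    exact (QuotientGroup.eq_one_iff _).mp h2
  have hφψcomm : ∀ w ∈ commutator (FreeGroup (Fin n)), φ w = ψ w :=
    eq_on_commutator_of_central_diff φ ψ hdiff
  -- φ kills all relators in T
  have hφT : ∀ x ∈ T, x ∈ φ.ker := by
    rw [hT]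
    rintro x (⟨i, rfl⟩ | ⟨⟨i, j⟩, rfl⟩)
    · rw [MonoidHom.mem_ker, map_mul, hφof i, hφψcomm (c i) (hc i)]
      have hzi : z i = ψ (FreeGroup.of i) * ψ (c i) := by rw [hzdef]; exact map_mul ψ _ _
      have hzinv := Subgroup.mem_center_iff.mp ((Subgroup.center D.E).inv_mem (hz i))
      rw [mul_assoc, ← hzinv (ψ (c i)), ← mul_assoc, ← hzi, mul_inv_cancel]
    · have heq : (FreeGroup.of i)⁻¹ * (r j)⁻¹ * FreeGroup.of i * r j
          = ⁅(FreeGroup.of i)⁻¹, (r j)⁻¹⁆ := by group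
      have hmem : (FreeGroup.of i)⁻¹ * (r j)⁻¹ * FreeGroup.of i * r j
          ∈ commutator (FreeGroup (Fin n)) := by
        rw [heq, commutator]
        exact Subgroup.commutator_mem_commutator (Subgroup.mem_top _) (Subgroup.mem_top _)
      rw [MonoidHom.mem_ker, hφψcomm _ hmem, heq, map_commutatorElement,
        commutatorElement_eq_one_iff_mul_comm]
      simp only [map_inv]
      have hcen := Subgroup.mem_center_iff.mp
        ((Subgroup.center D.E).inv_mem (hψR (r j) (Subgroup.subset_normalClosure ⟨j, rfl⟩)))
      exact hcen _
  have hSker : Subgroup.normalClosure T ≤ φ.ker := Subgroup.normalClosure_le_normal hφT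
  set f : (FreeGroup (Fin n) ⧸ Subgroup.normalClosure T) →* D.E :=
    QuotientGroup.lift (Subgroup.normalClosure T) φ hSker with hfdef
  have hfmk : ∀ w : FreeGroup (Fin n), f (QuotientGroup.mk w) = φ w := fun w => rfl
  have hcomp : D.π.comp f = π := by
    apply QuotientGroup.monoidHom_ext
    apply FreeGroup.ext_hom
    intro i
    simp only [MonoidHom.comp_apply, QuotientGroup.mk'_apply]
    rw [hfmk, hφof i, map_mul, map_inv, hπψ, hzker i, inv_one, mul_one, hπmk]
  -- perfectness of the quotient by the normal closure of T
  have hGperf : commutator (FreeGroup (Fin n) ⧸ Subgroup.normalClosure T) = ⊤ := by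
    rw [eq_top_iff, ← hgen]
    apply (Subgroup.closure_le _).mpr
    rintro _ ⟨i, rfl⟩
    have h1 : (QuotientGroup.mk (FreeGroup.of i * c i) :
        FreeGroup (Fin n) ⧸ Subgroup.normalClosure T) = 1 :=
      hTone _ (by rw [hT]; exact Or.inl ⟨i, rfl⟩)
    rw [QuotientGroup.mk_mul] at h1
    have h2 : (QuotientGroup.mk (FreeGroup.of i) :
        FreeGroup (Fin n) ⧸ Subgroup.normalClosure T)
        = (QuotientGroup.mk (c i) : FreeGroup (Fin n) ⧸ Subgroup.normalClosure T)⁻¹ :=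
      eq_inv_of_mul_eq_one_left h1
    show (QuotientGroup.mk (FreeGroup.of i) : FreeGroup (Fin n) ⧸ Subgroup.normalClosure T)
      ∈ commutator _
    rw [h2]
    apply Subgroup.inv_mem
    have hmap : (commutator (FreeGroup (Fin n))).map
        (QuotientGroup.mk' (Subgroup.normalClosure T))
        ≤ commutator (FreeGroup (Fin n) ⧸ Subgroup.normalClosure T) := by
      rw [commutator, commutator, Subgroup.map_commutator]
      exact Subgroup.commutator_mono le_top le_top
    exact hmap ⟨c i, hc i, rfl⟩
  refine ⟨f, hcomp, ?_⟩
  intro f' hf'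
  have hdiff' : ∀ g, f' g * (f g)⁻¹ ∈ Subgroup.center D.E := by
    intro g
    apply D.central
    rw [MonoidHom.mem_ker, map_mul, map_inv]
    have h1 : D.π (f' g) = π g := DFunLike.congr_fun hf' g
    have h2 : D.π (f g) = π g := DFunLike.congr_fun hcomp g
    rw [h1, h2, mul_inv_cancel]
  apply MonoidHom.ext
  intro g
  exact eq_on_commutator_of_central_diff f' f hdiff' g (hGperf ▸ Subgroup.mem_top g)
end

section
/- Let Γ be a countable group with generating set {c₀, c₁, c₂, …}, and form G' = Γ * ⟨x⟩ * ⟨s⟩, the free product with two infinite cyclic groups. For each n ≥ 0, the subgroup Hₙ of G' generated by Sₙ = {s^{i+1} c_i x s^{−i−1} : i ≥ n} is freely generated by Sₙ. -/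
namespace Stmt15

variable {Γ : Type*} [Group Γ]

/-- `G' = Γ * ⟨x⟩ * ⟨s⟩`, realised as the free product of `Γ` with the free group
on two generators (`x = of false` and `s = of true`). -/
abbrev Gaux (Γ : Type*) [Group Γ] := Monoid.Coprod Γ (FreeGroup Bool)

/-- The generator `x` of the first infinite cyclic free factor. -/
def x (Γ : Type*) [Group Γ] : Gaux Γ := Monoid.Coprod.inr (FreeGroup.of false)

/-- The generator `s` of the second infinite cyclic free factor. -/
def s (Γ : Type*) [Group Γ] : Gaux Γ := Monoid.Coprod.inr (FreeGroup.of true)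

/-- The element `sᵢ = s^{i+1} cᵢ x s^{-(i+1)}` of `G' = Γ * ⟨x⟩ * ⟨s⟩`. -/
def sElt (c : ℕ → Γ) (i : ℕ) : Gaux Γ :=
  s Γ ^ (i + 1) * (Monoid.Coprod.inl (c i) * x Γ) * (s Γ ^ (i + 1))⁻¹


/-- The shift action of `ℤ` on `FreeGroup ℤ`. -/
def shift : Multiplicative ℤ →* MulAut (FreeGroup ℤ) where
  toFun z := FreeGroup.freeGroupCongr (Equiv.addLeft z.toAdd)
  map_one' := by
    convert FreeGroup.freeGroupCongr_refl (α := ℤ) using 2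
    ext a; simp
    rfl
  map_mul' a b := by
    refine MulEquiv.ext fun w => ?_
    have h : (Equiv.addLeft (a * b).toAdd : ℤ ≃ ℤ)
        = (Equiv.addLeft b.toAdd).trans (Equiv.addLeft a.toAdd) := by
      ext t; simp [add_assoc]
    show FreeGroup.freeGroupCongr (Equiv.addLeft (a * b).toAdd) w
        = FreeGroup.freeGroupCongr (Equiv.addLeft a.toAdd)
            (FreeGroup.freeGroupCongr (Equiv.addLeft b.toAdd) w)
    rw [h, ← FreeGroup.freeGroupCongr_trans]
    rfl

abbrev K := FreeGroup ℤ ⋊[shift] Multiplicative ℤ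

/-- Kill `Γ`, send `x ↦ of 0`, `s ↦ ofAdd 1`. -/
def φ (Γ : Type*) [Group Γ] : Gaux Γ →* K :=
  Monoid.Coprod.lift 1
    (FreeGroup.lift (fun b => if b then SemidirectProduct.inr (Multiplicative.ofAdd 1)
      else SemidirectProduct.inl (FreeGroup.of 0)))

lemma φ_sElt (c : ℕ → Γ) (i : ℕ) :
    φ Γ (sElt c i) = SemidirectProduct.inl (FreeGroup.of ((i : ℤ) + 1)) := by
  have hs : φ Γ (s Γ) = SemidirectProduct.inr (Multiplicative.ofAdd 1) := by
    simp [φ, s]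
  have hx : φ Γ (x Γ) = SemidirectProduct.inl (FreeGroup.of 0) := by
    simp [φ, x]
  have hc : φ Γ (Monoid.Coprod.inl (c i)) = 1 := by simp [φ]
  rw [sElt]
  simp only [map_mul, map_pow, map_inv, hs, hx, hc, one_mul, mul_one]
  rw [← map_pow, ← map_inv, ← SemidirectProduct.inl_aut]
  congr 1
  show FreeGroup.freeGroupCongr _ _ = _
  simp

/-- for a countable group `Γ` with generating set `{c₀, c₁, …}` and
`G' = Γ * ⟨x⟩ * ⟨s⟩`, for every `n` the set `Sₙ = {s^{i+1} cᵢ x s^{-(i+1)} : i ≥ n}`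
freely generates the subgroup `Hₙ` it generates: the induced map from the free group
on `{i : ℕ // n ≤ i}` is injective. -/
theorem stmt_15 (c : ℕ → Γ) (hc : Subgroup.closure (Set.range c) = ⊤) (n : ℕ) :
    Function.Injective
      (FreeGroup.lift (fun i : {i : ℕ // n ≤ i} => sElt c i) :
        FreeGroup {i : ℕ // n ≤ i} →* Gaux Γ) := by
  set f : {i : ℕ // n ≤ i} → ℤ := fun i => (i : ℤ) + 1 with hf
  have hcomp : (φ Γ).comp (FreeGroup.lift (fun i : {i : ℕ // n ≤ i} => sElt c i))
      = (SemidirectProduct.inl (φ := shift)).comp (FreeGroup.map f) := by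
    refine FreeGroup.ext_hom _ _ fun i => ?_
    rw [MonoidHom.comp_apply, MonoidHom.comp_apply, FreeGroup.lift_apply_of, φ_sElt,
      FreeGroup.map.of]
  have hmapinj : Function.Injective (FreeGroup.map f : FreeGroup _ →* FreeGroup ℤ) := by
    set g : ℤ → {i : ℕ // n ≤ i} := fun z => ⟨max n (z - 1).toNat, le_max_left _ _⟩ with hg
    have : Function.LeftInverse (FreeGroup.map g) (FreeGroup.map f) := by
      intro w
      rw [FreeGroup.map.comp]
      have : (g ∘ f) = id := by
        funext i
        simp only [Function.comp, g, f, id]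
        ext
        simp [i.2]
      rw [this, FreeGroup.map.id]
    exact this.injective
  have := (SemidirectProduct.inl_injective (φ := shift)).comp hmapinj
  intro a b hab
  apply this
  have : ((SemidirectProduct.inl (φ := shift)).comp (FreeGroup.map f)) a
      = ((SemidirectProduct.inl (φ := shift)).comp (FreeGroup.map f)) b := by
    rw [← hcomp]; simp [hab]
  exact this

end Stmt15
end

section
/- Every countable group Γ embeds into a group generated by 4 elements. Concretely, with G' = Γ * ⟨x⟩ * ⟨s⟩ and the isomorphism H₀ → H₁ sending s_i = s^{i+1}c_i x s^{−i−1} to s_{i+1}, the HNN extension G of G' with stable letter t conjugating H₀ to H₁ is generated by {s, t, x, c₀} and contains Γ. -/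
namespace Stmt16

variable {Γ : Type*} [Group Γ]

/-- `G' = Γ * ⟨x⟩ * ⟨s⟩`, realised as the free product of `Γ` with the free group
on two generators (`x = of false` and `s = of true`). -/
abbrev Gaux (Γ : Type*) [Group Γ] := Monoid.Coprod Γ (FreeGroup Bool)

/-- The generator `x` of the first infinite cyclic free factor. -/
def x (Γ : Type*) [Group Γ] : Gaux Γ := Monoid.Coprod.inr (FreeGroup.of false)

/-- The generator `s` of the second infinite cyclic free factor. -/
def s (Γ : Type*) [Group Γ] : Gaux Γ := Monoid.Coprod.inr (FreeGroup.of true)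

/-- The element `sᵢ = s^{i+1} cᵢ x s^{-(i+1)}` of `G' = Γ * ⟨x⟩ * ⟨s⟩`. -/
def sElt (c : ℕ → Γ) (i : ℕ) : Gaux Γ :=
  s Γ ^ (i + 1) * (Monoid.Coprod.inl (c i) * x Γ) * (s Γ ^ (i + 1))⁻¹

/-- `H₀ = ⟨sᵢ : i ≥ 0⟩`. -/
def H0 (c : ℕ → Γ) : Subgroup (Gaux Γ) := Subgroup.closure (Set.range (sElt c))

/-- `H₁ = ⟨sᵢ : i ≥ 1⟩`. -/
def H1 (c : ℕ → Γ) : Subgroup (Gaux Γ) :=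
  Subgroup.closure (Set.range fun i : ℕ => sElt c (i + 1))

/-- every countable group `Γ` (with generating set `{c₀, c₁, …}`)
embeds into a `4`-generator group.  Concretely, for any isomorphism `φ : H₀ ≃* H₁`
with `φ(sᵢ) = s_{i+1}`, the HNN extension `G` of `G' = Γ * ⟨x⟩ * ⟨s⟩` with stable
letter `t` conjugating `H₀` to `H₁` contains `Γ` (the canonical map `Γ → G` is
injective) and is generated by `{s, t, x, c₀}`. -/
theorem stmt_16 (c : ℕ → Γ) (hc : Subgroup.closure (Set.range c) = ⊤)
    (φ : H0 c ≃* H1 c)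
    (hφ : ∀ (i : ℕ) (h : sElt c i ∈ H0 c), (φ ⟨sElt c i, h⟩ : Gaux Γ) = sElt c (i + 1)) :
    Function.Injective
        ((HNNExtension.of : Gaux Γ →* HNNExtension (Gaux Γ) (H0 c) (H1 c) φ).comp
          (Monoid.Coprod.inl : Γ →* Gaux Γ)) ∧
      Subgroup.closure
          {HNNExtension.of (s Γ), (HNNExtension.t : HNNExtension (Gaux Γ) (H0 c) (H1 c) φ),
            HNNExtension.of (x Γ), HNNExtension.of (Monoid.Coprod.inl (c 0))} = ⊤ := by
  constructor
  · rw [MonoidHom.coe_comp]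
    exact Function.Injective.comp (HNNExtension.of_injective φ) Monoid.Coprod.inl_injective
  · set K := Subgroup.closure
        {HNNExtension.of (s Γ), (HNNExtension.t : HNNExtension (Gaux Γ) (H0 c) (H1 c) φ),
          HNNExtension.of (x Γ), HNNExtension.of (Monoid.Coprod.inl (c 0))} with hK
    have hs : HNNExtension.of (s Γ) ∈ K := Subgroup.subset_closure (by simp)
    have ht : (HNNExtension.t : HNNExtension (Gaux Γ) (H0 c) (H1 c) φ) ∈ K :=
      Subgroup.subset_closure (by simp)
    have hx : HNNExtension.of (x Γ) ∈ K := Subgroup.subset_closure (by simp)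
    have hc0 : HNNExtension.of (Monoid.Coprod.inl (c 0)) ∈ K :=
      Subgroup.subset_closure (by simp)
    have hmemH0 : ∀ i, sElt c i ∈ H0 c := fun i =>
      Subgroup.subset_closure ⟨i, rfl⟩
    have hsElt : ∀ i, HNNExtension.of (sElt c i) ∈ K := by
      intro i
      induction i with
      | zero =>
        simp only [sElt, pow_one, map_mul, map_inv]
        exact mul_mem (mul_mem hs (mul_mem hc0 hx)) (inv_mem hs)
      | succ n ih =>
        have := HNNExtension.equiv_eq_conj (φ := φ) ⟨sElt c n, hmemH0 n⟩
        rw [hφ n (hmemH0 n)] at this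
        rw [this]
        exact mul_mem (mul_mem ht ih) (inv_mem ht)
    have hci : ∀ i, HNNExtension.of (Monoid.Coprod.inl (c i) : Gaux Γ) ∈ K := by
      intro i
      have : (Monoid.Coprod.inl (c i) : Gaux Γ) =
          (s Γ ^ (i + 1))⁻¹ * sElt c i * s Γ ^ (i + 1) * (x Γ)⁻¹ := by
        simp [sElt, mul_assoc]
      rw [this]
      simp only [map_mul, map_inv, map_pow]
      exact mul_mem (mul_mem (mul_mem (inv_mem (pow_mem hs _)) (hsElt i))
        (pow_mem hs _)) (inv_mem hx)
    have hofK : ∀ g : Gaux Γ, HNNExtension.of g ∈ K := by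
      intro g
      induction g using Monoid.Coprod.induction_on with
      | inl m =>
        have : m ∈ Subgroup.closure (Set.range c) := hc ▸ Subgroup.mem_top m
        induction this using Subgroup.closure_induction with
        | mem y hy => obtain ⟨i, rfl⟩ := hy; exact hci i
        | one => simp [one_mem]
        | mul a b _ _ ha hb => rw [map_mul, map_mul]; exact mul_mem ha hb
        | inv a _ ha => rw [map_inv, map_inv]; exact inv_mem ha
      | inr n =>
        have : n ∈ Subgroup.closure (Set.range (FreeGroup.of : Bool → FreeGroup Bool)) := by
          rw [FreeGroup.closure_range_of]; trivial
        induction this using Subgroup.closure_induction with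
        | mem y hy =>
          obtain ⟨b, rfl⟩ := hy
          cases b
          · exact hx
          · exact hs
        | one => simp [one_mem]
        | mul a b _ _ ha hb => rw [map_mul, map_mul]; exact mul_mem ha hb
        | inv a _ ha => rw [map_inv, map_inv]; exact inv_mem ha
      | mul a b ha hb => rw [map_mul]; exact mul_mem ha hb
    rw [eq_top_iff]
    intro g _
    refine HNNExtension.induction_on g hofK ht (fun a b ha hb => mul_mem ha hb)
      (fun a ha => inv_mem ha)

end Stmt16
end

section
/- Let F be a finitely generated free group and let G = F × F. There is no algorithm that, given a finite subset S ⊆ F × F (as words in a fixed basis), decides whether the subgroup generated by S is finitely presentable — assuming the existence of a recursive sequence of finite presentations ⟨X | Rₙ⟩ of groups Qₙ such that {n : Qₙ ≅ 1} is recursively enumerable but not recursive, together with the fact that the fibre product in F × F of a surjection F → Qₙ is finitely presentable if and only if Qₙ is finite. -/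
/-- A group is finitely presentable if it is isomorphic to a quotient of a finitely
generated free group by the normal closure of a finite set of relators. -/
def IsFinitelyPresentable (G : Type*) [Group G] : Prop :=
  ∃ (n : ℕ) (R : Finset (FreeGroup (Fin n))),
    Nonempty (G ≃* (FreeGroup (Fin n) ⧸ Subgroup.normalClosure (R : Set (FreeGroup (Fin n)))))

lemma mem_fibreProduct {Γ Q : Type*} [Group Γ] [Group Q] (η : Γ →* Q)
    (p : Γ × Γ) : p ∈ fibreProduct η ↔ η p.1 = η p.2 := Iff.rfl

/-- The encoding of the standard generating set of the fibre product. -/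
def genList (k : ℕ) (R : List (List (Fin k × Bool))) :
    List (List (Fin k × Bool) × List (Fin k × Bool)) :=
  (List.finRange k).map (fun i => ([(i, true)], [(i, true)])) ++ R.map (fun r => (r, []))

lemma closure_genList (k : ℕ) (R : List (List (Fin k × Bool))) :
    Subgroup.closure
        {p : FreeGroup (Fin k) × FreeGroup (Fin k) |
          ∃ q ∈ genList k R, p = (FreeGroup.mk q.1, FreeGroup.mk q.2)} =
      fibreProduct
        (QuotientGroup.mk' (Subgroup.normalClosure (FreeGroup.mk '' {w | w ∈ R}))) := by
  set N := Subgroup.normalClosure (FreeGroup.mk '' {w | w ∈ R}) with hN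
  set η := QuotientGroup.mk' N with hη
  set S : Set (FreeGroup (Fin k) × FreeGroup (Fin k)) :=
    {p | ∃ q ∈ genList k R, p = (FreeGroup.mk q.1, FreeGroup.mk q.2)} with hS
  have hrel : ∀ r ∈ R, (FreeGroup.mk r, (1 : FreeGroup (Fin k))) ∈ S := by
    intro r hr
    exact ⟨(r, []), List.mem_append_right _ (List.mem_map.2 ⟨r, hr, rfl⟩), rfl⟩
  have hdiagS : ∀ i : Fin k, (FreeGroup.of i, FreeGroup.of i) ∈ S := by
    intro i
    exact ⟨([(i, true)], [(i, true)]),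
      List.mem_append_left _ (List.mem_map.2 ⟨i, List.mem_finRange i, rfl⟩), rfl⟩
  have hdiag : ∀ x : FreeGroup (Fin k), (x, x) ∈ Subgroup.closure S := by
    intro x
    have hx : x ∈ Subgroup.closure (Set.range (FreeGroup.of : Fin k → FreeGroup (Fin k))) := by
      rw [FreeGroup.closure_range_of]; trivial
    refine Subgroup.closure_induction (p := fun x _ => (x, x) ∈ Subgroup.closure S)
      ?_ ?_ ?_ ?_ hx
    · rintro _ ⟨i, rfl⟩
      exact Subgroup.subset_closure (hdiagS i)
    · exact Subgroup.one_mem _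
    · intro a b _ _ ha hb
      exact mul_mem ha hb
    · intro a _ ha
      exact inv_mem ha
  have hNpart : ∀ x ∈ N, ((x, 1) : FreeGroup (Fin k) × FreeGroup (Fin k)) ∈
      Subgroup.closure S := by
    intro x hx
    rw [hN, Subgroup.normalClosure] at hx
    refine Subgroup.closure_induction
      (p := fun x _ => ((x, 1) : FreeGroup (Fin k) × FreeGroup (Fin k)) ∈ Subgroup.closure S)
      ?_ ?_ ?_ ?_ hx
    · intro y hy
      obtain ⟨a, ha, hc⟩ := Group.mem_conjugatesOfSet_iff.1 hy
      obtain ⟨c, hc⟩ := hc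
      obtain ⟨r, hr, rfl⟩ := ha
      have hy' : y = (c : FreeGroup (Fin k)) * FreeGroup.mk r * (c : FreeGroup (Fin k))⁻¹ := by
        rw [eq_mul_inv_iff_mul_eq]
        exact hc.eq.symm
      have heq : ((y, 1) : FreeGroup (Fin k) × FreeGroup (Fin k)) =
          ((c : FreeGroup (Fin k)), (c : FreeGroup (Fin k))) * (FreeGroup.mk r, 1) *
            ((c : FreeGroup (Fin k)), (c : FreeGroup (Fin k)))⁻¹ := by
        rw [hy']
        ext <;> simp
      rw [heq]
      exact mul_mem (mul_mem (hdiag _) (Subgroup.subset_closure (hrel r hr)))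
        (inv_mem (hdiag _))
    · exact Subgroup.one_mem _
    · intro a b _ _ ha hb
      have := mul_mem ha hb
      simpa using this
    · intro a _ ha
      have := inv_mem ha
      simpa using this
  apply le_antisymm
  · rw [Subgroup.closure_le]
    rintro p ⟨q, hq, rfl⟩
    rcases List.mem_append.1 hq with h | h
    · obtain ⟨i, _, rfl⟩ := List.mem_map.1 h
      exact (mem_fibreProduct η _).2 rfl
    · obtain ⟨r, hr, rfl⟩ := List.mem_map.1 h
      refine (mem_fibreProduct η _).2 ?_
      have hrN : FreeGroup.mk r ∈ N :=
        Subgroup.subset_normalClosure ⟨r, hr, rfl⟩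
      show η (FreeGroup.mk r) = η (FreeGroup.mk [])
      have h1 : η (FreeGroup.mk r) = 1 := by
        rw [← QuotientGroup.ker_mk' N] at hrN
        exact hrN
      rw [h1]
      rfl
  · intro p hp
    have hmem : p.1⁻¹ * p.2 ∈ N := by
      have : η (p.1⁻¹ * p.2) = 1 := by
        rw [map_mul, map_inv, (mem_fibreProduct η p).1 hp]
        group
      rw [← QuotientGroup.ker_mk' N]
      exact this
    have hmem2 : p.1 * p.2⁻¹ ∈ N := by
      have h1 : p.1 * (p.1⁻¹ * p.2)⁻¹ * p.1⁻¹ ∈ N :=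
        Subgroup.Normal.conj_mem inferInstance _ (inv_mem hmem) _
      have : p.1 * (p.1⁻¹ * p.2)⁻¹ * p.1⁻¹ = p.1 * p.2⁻¹ := by group
      rwa [this] at h1
    have : p = (p.1 * p.2⁻¹, 1) * (p.2, p.2) := by
      ext <;> simp
    rw [this]
    exact mul_mem (hNpart _ hmem2) (hdiag p.2)

/-- let `F` be a finitely generated free group (on `k` letters) and
`G = F × F`.  Assume there is a computable (recursive) sequence `n ↦ Rₙ` of finite
lists of relator words such that, with `Nₙ` the normal closure of `Rₙ` and
`Qₙ = F/Nₙ`, the set `{n : Qₙ ≅ 1}` is recursively enumerable but not recursive,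
the nontrivial `Qₙ` are infinite, and (Grunewald) the fibre product in `F × F` of
`F ↠ Qₙ` is finitely presentable iff `Qₙ` is finite.  Then there is no algorithm
(computable function) that, given a finite list of pairs of words representing a
finite subset `S ⊆ F × F`, decides whether the subgroup generated by `S` is
finitely presentable. -/
theorem stmt_18 (k : ℕ) (Rl : ℕ → List (List (Fin k × Bool)))
    (hRl : Computable Rl)
    (hre : REPred fun n =>
      Subgroup.normalClosure (FreeGroup.mk '' {w | w ∈ Rl n}) = (⊤ : Subgroup (FreeGroup (Fin k))))
    (hnonrec : ¬ ComputablePred fun n =>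
      Subgroup.normalClosure (FreeGroup.mk '' {w | w ∈ Rl n}) = (⊤ : Subgroup (FreeGroup (Fin k))))
    (hfin : ∀ n,
      Finite (FreeGroup (Fin k) ⧸ Subgroup.normalClosure (FreeGroup.mk '' {w | w ∈ Rl n})) ↔
        Subgroup.normalClosure (FreeGroup.mk '' {w | w ∈ Rl n}) = ⊤)
    (hGrunewald : ∀ n,
      IsFinitelyPresentable
          (fibreProduct
            (QuotientGroup.mk' (Subgroup.normalClosure (FreeGroup.mk '' {w | w ∈ Rl n})))) ↔
        Finite (FreeGroup (Fin k) ⧸ Subgroup.normalClosure (FreeGroup.mk '' {w | w ∈ Rl n}))) :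
    ¬ ∃ f : List (List (Fin k × Bool) × List (Fin k × Bool)) → Bool,
        Computable f ∧
          ∀ L, f L = true ↔
            IsFinitelyPresentable
              (Subgroup.closure
                {p : FreeGroup (Fin k) × FreeGroup (Fin k) |
                  ∃ q ∈ L, p = (FreeGroup.mk q.1, FreeGroup.mk q.2)}) := by
  rintro ⟨f, hf, hspec⟩
  apply hnonrec
  rw [ComputablePred.computable_iff]
  refine ⟨fun n => f (genList k (Rl n)), ?_, ?_⟩
  · have hg : Computable fun n => genList k (Rl n) := by
      have hmap : Primrec (fun R : List (List (Fin k × Bool)) => genList k R) := by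
        unfold genList
        exact Primrec.list_append.comp (Primrec.const _)
          (Primrec.list_map Primrec.id
            ((Primrec.pair Primrec.id (Primrec.const [])).comp Primrec.snd).to₂)
      exact hmap.to_comp.comp hRl
    exact hf.comp hg
  · funext n
    have h1 := hspec (genList k (Rl n))
    rw [closure_genList k (Rl n)] at h1
    rw [hGrunewald n, hfin n] at h1
    exact propext (Iff.symm h1)
end
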